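/- For every graph H with at least one edge, there is a constant c₂ > 0 such that for all sufficiently large ℓ, there exists a graph G with at most ℓ edges admitting at least c₂ · ℓ^{ρ*(H)} embeddings of H, where ρ*(H) is the fractional vertex cover number of H. -/

import Mathlib

open Finset

/-- The number of embeddings (injective graph homomorphisms) of `H` into `G`. -/
noncomputable def embedCount {k m : ℕ} (H : SimpleGraph (Fin k)) (G : SimpleGraph (Fin m)) : ℕ :=
  Nat.card {f : Fin k → Fin m //
    Function.Injective f ∧ ∀ u v : Fin k, H.Adj u v → G.Adj (f u) (f v)}

/-- The fractional vertex cover number `ρ*(H)`: the infimum of `Σ_e φ(e)` over fractional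
cover functions `φ : E(H) → [0,1]` with `Σ_{e ∋ v} φ(e) ≥ 1` for every vertex `v`. -/
noncomputable def fracCoverNum {k : ℕ} (H : SimpleGraph (Fin k)) [DecidableRel H.Adj] : ℝ :=
  sInf {r : ℝ | ∃ φ : Sym2 (Fin k) → ℝ,
    (∀ e, 0 ≤ φ e ∧ φ e ≤ 1) ∧
    (∀ v : Fin k, 1 ≤ ∑ e ∈ H.edgeFinset.filter (fun e => v ∈ e), φ e) ∧
    r = ∑ e ∈ H.edgeFinset, φ e}

lemma blowup {k : ℕ} (H : SimpleGraph (Fin k)) [DecidableRel H.Adj] (n : Fin k → ℕ) (B : ℕ)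
    (hB : ∀ u v, H.Adj u v → n u * n v ≤ B) :
    ∃ (m : ℕ) (G : SimpleGraph (Fin m)),
      G.edgeSet.ncard ≤ H.edgeFinset.card * B ∧ (∏ v, n v) ≤ embedCount H G := by
  classical
  set V := (Σ v : Fin k, Fin (n v)) with hV
  let G₀ : SimpleGraph V :=
    { Adj := fun x y => H.Adj x.1 y.1
      symm := ⟨fun x y h => h.symm⟩
      loopless := ⟨fun x h => H.loopless.irrefl _ h⟩ }
  haveI : DecidableRel G₀.Adj := fun x y => inferInstanceAs (Decidable (H.Adj x.1 y.1))
  let m := Fintype.card V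
  let e : V ≃ Fin m := Fintype.equivFin V
  let G : SimpleGraph (Fin m) := G₀.comap e.symm
  haveI : DecidableRel G.Adj := Classical.decRel _
  refine ⟨m, G, ?_, ?_⟩
  · -- edge count
    have hiso : G₀ ≃g G := ⟨e, by intro a b; simp [G, SimpleGraph.comap]⟩
    have hcard : G.edgeFinset.card = G₀.edgeFinset.card :=
      (SimpleGraph.Iso.card_edgeFinset_eq hiso).symm
    have hdeg : ∀ x : V, G₀.degree x = ∑ u ∈ H.neighborFinset x.1, n u := by
      intro x
      have : G₀.neighborFinset x = (H.neighborFinset x.1).sigma (fun u => Finset.univ) := by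
        ext y
        rw [SimpleGraph.mem_neighborFinset, Finset.mem_sigma]
        show H.Adj x.1 y.1 ↔ _
        simp [SimpleGraph.mem_neighborFinset]
      rw [SimpleGraph.degree, this, Finset.card_sigma]
      simp
    have hsum : ∑ x : V, G₀.degree x ≤ H.edgeFinset.card * B * 2 := by
      have h1 : ∑ x : V, G₀.degree x = ∑ v : Fin k, ∑ i : Fin (n v), ∑ u ∈ H.neighborFinset v, n u := by
        rw [← Finset.univ_sigma_univ, Finset.sum_sigma]
        exact Finset.sum_congr rfl (fun v _ => Finset.sum_congr rfl (fun i _ => hdeg ⟨v, i⟩))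
      rw [h1]
      have h2 : ∀ v : Fin k, ∑ i : Fin (n v), ∑ u ∈ H.neighborFinset v, n u
          ≤ ∑ u ∈ H.neighborFinset v, B := by
        intro v
        rw [Finset.sum_const, Finset.card_univ, Fintype.card_fin, smul_eq_mul, Finset.mul_sum]
        exact Finset.sum_le_sum fun u hu =>
          hB v u (by rwa [SimpleGraph.mem_neighborFinset] at hu)
      calc ∑ v : Fin k, ∑ i : Fin (n v), ∑ u ∈ H.neighborFinset v, n u
          ≤ ∑ v : Fin k, ∑ u ∈ H.neighborFinset v, B := Finset.sum_le_sum (fun v _ => h2 v)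
        _ = ∑ v : Fin k, H.degree v * B := by
              refine Finset.sum_congr rfl (fun v _ => ?_)
              rw [Finset.sum_const, smul_eq_mul]; rfl
        _ = (∑ v : Fin k, H.degree v) * B := by rw [Finset.sum_mul]
        _ = 2 * H.edgeFinset.card * B := by rw [SimpleGraph.sum_degrees_eq_twice_card_edges]
        _ = H.edgeFinset.card * B * 2 := by ring
    have := SimpleGraph.sum_degrees_eq_twice_card_edges G₀
    have hE0 : G₀.edgeFinset.card ≤ H.edgeFinset.card * B := by omega
    have : G.edgeSet.ncard = G.edgeFinset.card := by
      rw [Set.ncard_eq_toFinset_card', SimpleGraph.edgeFinset]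
    omega
  · -- embedding count
    have key : ∀ g : (∀ v : Fin k, Fin (n v)),
        Function.Injective (fun v => e ⟨v, g v⟩) ∧
        ∀ u v : Fin k, H.Adj u v → G.Adj (e ⟨u, g u⟩) (e ⟨v, g v⟩) := by
      intro g
      constructor
      · intro u v huv
        have := e.injective huv
        exact congrArg Sigma.fst this
      · intro u v huv
        simp only [G, SimpleGraph.comap_adj, Equiv.symm_apply_apply]
        exact huv
    let Φ : (∀ v : Fin k, Fin (n v)) → {f : Fin k → Fin m //
        Function.Injective f ∧ ∀ u v : Fin k, H.Adj u v → G.Adj (f u) (f v)} :=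
      fun g => ⟨fun v => e ⟨v, g v⟩, key g⟩
    have hΦ : Function.Injective Φ := by
      intro g g' h
      have h' : ∀ v, e ⟨v, g v⟩ = e ⟨v, g' v⟩ := fun v => congrFun (congrArg Subtype.val h) v
      funext v
      have := e.injective (h' v)
      exact heq_iff_eq.mp (Sigma.mk.inj_iff.mp this).2
    have := Nat.card_le_card_of_injective Φ hΦ
    calc (∏ v, n v) = Nat.card (∀ v : Fin k, Fin (n v)) := by simp [Nat.card_eq_fintype_card]
      _ ≤ _ := this

lemma isolated_case {k : ℕ} (H : SimpleGraph (Fin k)) [DecidableRel H.Adj]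
    (v : Fin k) (hv : ∀ u, ¬ H.Adj v u) : fracCoverNum H = 0 := by
  have : {r : ℝ | ∃ φ : Sym2 (Fin k) → ℝ,
      (∀ e, 0 ≤ φ e ∧ φ e ≤ 1) ∧
      (∀ v : Fin k, 1 ≤ ∑ e ∈ H.edgeFinset.filter (fun e => v ∈ e), φ e) ∧
      r = ∑ e ∈ H.edgeFinset, φ e} = ∅ := by
    ext r
    simp only [Set.mem_setOf_eq, Set.mem_empty_iff_false, iff_false]
    rintro ⟨φ, h1, h2, h3⟩
    have hfil : H.edgeFinset.filter (fun e => v ∈ e) = ∅ := by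
      ext e
      simp only [Finset.mem_filter, Finset.notMem_empty, iff_false, not_and]
      intro he hm
      induction e with
      | h a b =>
        rw [SimpleGraph.mem_edgeFinset, SimpleGraph.mem_edgeSet] at he
        rcases Sym2.mem_iff.mp hm with rfl | rfl
        · exact hv b he
        · exact hv a he.symm
    have := h2 v
    rw [hfil] at this
    simp at this
    linarith
  rw [fracCoverNum, this, Real.sInf_empty]

lemma core {k : ℕ} (H : SimpleGraph (Fin k)) [DecidableRel H.Adj]
    (hniso : ∀ v : Fin k, ∃ u, H.Adj v u) :
    ∃ A R : Finset (Fin k), Disjoint A R ∧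
      (∀ u v : Fin k, H.Adj u v → u ∈ A → v ∉ A ∧ v ∉ R) ∧
      fracCoverNum H ≤ (A.card : ℝ) + (R.card : ℝ) / 2 := by
  classical
  set nbr : Fin k → Finset (Fin k) := fun v => H.neighborFinset v with hnbr
  have hne : ((univ : Finset (Finset (Fin k))).filter
      (fun A : Finset (Fin k) => ∀ u ∈ A, ∀ v ∈ A, ¬ H.Adj u v)).Nonempty := ⟨∅, by simp⟩
  obtain ⟨A, hAmem, hAmax⟩ := Finset.exists_max_image _
    (fun A : Finset (Fin k) => (A.card : ℤ) - ((A.biUnion nbr).card : ℤ)) hne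
  have hAind : ∀ u ∈ A, ∀ v ∈ A, ¬ H.Adj u v := (Finset.mem_filter.mp hAmem).2
  have hmax : ∀ A' : Finset (Fin k), (∀ u ∈ A', ∀ v ∈ A', ¬ H.Adj u v) →
      (A'.card : ℤ) - ((A'.biUnion nbr).card : ℤ) ≤ (A.card : ℤ) - ((A.biUnion nbr).card : ℤ) :=
    fun A' h => hAmax A' (Finset.mem_filter.mpr ⟨Finset.mem_univ _, h⟩)
  set NA := A.biUnion nbr with hNA
  set R := (univ \ A) \ NA with hR
  have hmemnbr : ∀ a u : Fin k, u ∈ nbr a ↔ H.Adj a u := fun a u => by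
    simp [hnbr, SimpleGraph.mem_neighborFinset]
  have hnbrA : ∀ a ∈ A, ∀ u : Fin k, H.Adj a u → u ∈ NA := fun a ha u h =>
    Finset.mem_biUnion.mpr ⟨a, ha, (hmemnbr a u).mpr h⟩
  have hANA : ∀ v ∈ A, v ∉ NA := by
    intro v hv hvNA
    obtain ⟨a, ha, hadj⟩ := Finset.mem_biUnion.mp hvNA
    exact hAind a ha v hv ((hmemnbr a v).mp hadj)
  have hRA : ∀ v ∈ R, v ∉ A := fun v hv => (Finset.mem_sdiff.mp (Finset.mem_sdiff.mp hv).1).2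
  have hRNA : ∀ v ∈ R, v ∉ NA := fun v hv => (Finset.mem_sdiff.mp hv).2
  have hmemR : ∀ v : Fin k, v ∉ A → v ∉ NA → v ∈ R := fun v h1 h2 =>
    Finset.mem_sdiff.mpr ⟨Finset.mem_sdiff.mpr ⟨Finset.mem_univ v, h1⟩, h2⟩
  -- Hall condition 1 : matching NA into A
  have hall1 : ∀ s : Finset (Fin k),
      s.card ≤ (s.biUnion (fun x => if x ∈ NA then nbr x ∩ A else univ)).card := by
    intro s
    by_cases hs : ∀ x ∈ s, x ∈ NA
    · by_contra hlt
      push_neg at hlt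
      set W := s.biUnion (fun x => if x ∈ NA then nbr x ∩ A else univ) with hW
      have hWA : W ⊆ A := by
        intro u hu
        obtain ⟨x, hx, hmem⟩ := Finset.mem_biUnion.mp hu
        rw [if_pos (hs x hx)] at hmem
        exact (Finset.mem_inter.mp hmem).2
      set A' := A \ W with hA'
      have hA'ind : ∀ u ∈ A', ∀ v ∈ A', ¬ H.Adj u v := fun u hu v hv =>
        hAind u (Finset.mem_sdiff.mp hu).1 v (Finset.mem_sdiff.mp hv).1
      have hsub : A'.biUnion nbr ⊆ NA \ s := by
        intro u hu
        obtain ⟨a, ha, hmem⟩ := Finset.mem_biUnion.mp hu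
        have haA : a ∈ A := (Finset.mem_sdiff.mp ha).1
        have hadj : H.Adj a u := (hmemnbr a u).mp hmem
        refine Finset.mem_sdiff.mpr ⟨hnbrA a haA u hadj, fun hus => ?_⟩
        exact (Finset.mem_sdiff.mp ha).2 (Finset.mem_biUnion.mpr ⟨u, hus, by
          rw [if_pos (hs u hus)]
          exact Finset.mem_inter.mpr ⟨(hmemnbr u a).mpr hadj.symm, haA⟩⟩)
      have hWsub : W ⊆ A := hWA
      have hsNA : s ⊆ NA := hs
      have hc1 : (A'.card : ℤ) = (A.card : ℤ) - W.card := by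
        rw [hA', Finset.card_sdiff_of_subset hWA]
        have := Finset.card_le_card hWA
        omega
      have hc2 : ((A'.biUnion nbr).card : ℤ) ≤ (NA.card : ℤ) - s.card := by
        have h1 := Finset.card_le_card hsub
        rw [Finset.card_sdiff_of_subset hsNA] at h1
        have := Finset.card_le_card hsNA
        omega
      have := hmax A' hA'ind
      omega
    · push_neg at hs
      obtain ⟨x, hx, hxNA⟩ := hs
      have : (univ : Finset (Fin k)) ⊆ s.biUnion (fun x => if x ∈ NA then nbr x ∩ A else univ) := by
        have := Finset.subset_biUnion_of_mem (fun x => if x ∈ NA then nbr x ∩ A else univ) hx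
        rwa [if_neg hxNA] at this
      calc s.card ≤ (univ : Finset (Fin k)).card := Finset.card_le_card (Finset.subset_univ s)
        _ ≤ _ := Finset.card_le_card this
  obtain ⟨fM, hfMinj, hfMmem⟩ := (Finset.all_card_le_biUnion_card_iff_exists_injective _).mp hall1
  have hfM : ∀ x ∈ NA, fM x ∈ nbr x ∩ A := fun x hx => by
    have := hfMmem x; rwa [if_pos hx] at this
  -- Hall condition 2 : fractional matching on R
  have hall2 : ∀ s : Finset (Fin k),
      s.card ≤ (s.biUnion (fun x => if x ∈ R then nbr x ∩ R else univ)).card := by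
    intro s
    by_cases hs : ∀ x ∈ s, x ∈ R
    · by_contra hlt
      push_neg at hlt
      set W := s.biUnion (fun x => if x ∈ R then nbr x ∩ R else univ) with hW
      have hWmem : ∀ u x : Fin k, x ∈ s → u ∈ nbr x ∩ R → u ∈ W := by
        intro u x hx hu
        exact Finset.mem_biUnion.mpr ⟨x, hx, by rw [if_pos (hs x hx)]; exact hu⟩
      set B := s.filter (fun v => ∀ u ∈ s, ¬ H.Adj v u) with hB
      have hBs : B ⊆ s := Finset.filter_subset _ _
      have hsBW : s \ B ⊆ W := by
        intro v hv
        obtain ⟨hvs, hvB⟩ := Finset.mem_sdiff.mp hv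
        have : ¬ ∀ u ∈ s, ¬ H.Adj v u := fun h => hvB (Finset.mem_filter.mpr ⟨hvs, h⟩)
        push_neg at this
        obtain ⟨u, hus, hadj⟩ := this
        exact hWmem v u hus (Finset.mem_inter.mpr ⟨(hmemnbr u v).mpr hadj.symm, hs v hvs⟩)
      have hNBs : ∀ u ∈ (B.biUnion nbr), u ∉ s := by
        intro u hu hus
        obtain ⟨b, hb, hmem⟩ := Finset.mem_biUnion.mp hu
        exact (Finset.mem_filter.mp hb).2 u hus ((hmemnbr b u).mp hmem)
      have hABind : ∀ u ∈ A ∪ B, ∀ v ∈ A ∪ B, ¬ H.Adj u v := by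
        intro u hu v hv hadj
        rcases Finset.mem_union.mp hu with huA | huB <;>
          rcases Finset.mem_union.mp hv with hvA | hvB
        · exact hAind u huA v hvA hadj
        · exact hRNA v (hs v (hBs hvB)) (hnbrA u huA v hadj)
        · exact hRNA u (hs u (hBs huB)) (hnbrA v hvA u hadj.symm)
        · exact (Finset.mem_filter.mp huB).2 v (hBs hvB) hadj
      have hdisjAB : Disjoint A B := Finset.disjoint_left.mpr
        (fun a ha hb => hRA a (hs a (hBs hb)) ha)
      have hNAB : (A ∪ B).biUnion nbr ⊆ NA ∪ ((B.biUnion nbr) ∩ R) := by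
        intro u hu
        obtain ⟨x, hx, hmem⟩ := Finset.mem_biUnion.mp hu
        have hadj : H.Adj x u := (hmemnbr x u).mp hmem
        rcases Finset.mem_union.mp hx with hxA | hxB
        · exact Finset.mem_union_left _ (hnbrA x hxA u hadj)
        · have huNB : u ∈ B.biUnion nbr := Finset.mem_biUnion.mpr ⟨x, hxB, hmem⟩
          have huA : u ∉ A := fun huA =>
            hABind u (Finset.mem_union_left _ huA) x (Finset.mem_union_right _ hxB) hadj.symm
          by_cases huNA : u ∈ NA
          · exact Finset.mem_union_left _ huNA
          · exact Finset.mem_union_right _ (Finset.mem_inter.mpr ⟨huNB, hmemR u huA huNA⟩)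
      have hcard1 : (A ∪ B).card = A.card + B.card := Finset.card_union_of_disjoint hdisjAB
      have hcard2 : ((A ∪ B).biUnion nbr).card ≤ NA.card + ((B.biUnion nbr) ∩ R).card :=
        le_trans (Finset.card_le_card hNAB) (Finset.card_union_le _ _)
      have hBle : (B.card : ℤ) ≤ ((B.biUnion nbr) ∩ R).card := by
        have := hmax (A ∪ B) hABind
        omega
      have hNBRW : (B.biUnion nbr) ∩ R ⊆ W := by
        intro u hu
        obtain ⟨hu1, hu2⟩ := Finset.mem_inter.mp hu
        obtain ⟨b, hb, hmem⟩ := Finset.mem_biUnion.mp hu1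
        exact hWmem u b (hBs hb) (Finset.mem_inter.mpr ⟨hmem, hu2⟩)
      have hdisjW : Disjoint (s \ B) ((B.biUnion nbr) ∩ R) := Finset.disjoint_left.mpr
        (fun u hu1 hu2 => hNBs u (Finset.mem_inter.mp hu2).1 (Finset.mem_sdiff.mp hu1).1)
      have hWge : (s \ B).card + ((B.biUnion nbr) ∩ R).card ≤ W.card := by
        rw [← Finset.card_union_of_disjoint hdisjW]
        exact Finset.card_le_card (Finset.union_subset hsBW hNBRW)
      have hsB : (s \ B).card = s.card - B.card := Finset.card_sdiff_of_subset hBs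
      have := Finset.card_le_card hBs
      omega
    · push_neg at hs
      obtain ⟨x, hx, hxR⟩ := hs
      have : (univ : Finset (Fin k)) ⊆ s.biUnion (fun x => if x ∈ R then nbr x ∩ R else univ) := by
        have := Finset.subset_biUnion_of_mem (fun x => if x ∈ R then nbr x ∩ R else univ) hx
        rwa [if_neg hxR] at this
      calc s.card ≤ (univ : Finset (Fin k)).card := Finset.card_le_card (Finset.subset_univ s)
        _ ≤ _ := Finset.card_le_card this
  obtain ⟨fσ, hfσinj, hfσmem⟩ := (Finset.all_card_le_biUnion_card_iff_exists_injective _).mp hall2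
  have hfσ : ∀ x ∈ R, fσ x ∈ nbr x ∩ R := fun x hx => by
    have := hfσmem x; rwa [if_pos hx] at this
  have hfσR : ∀ v ∈ R, ∃ u ∈ R, fσ u = v := by
    have himg : R.image fσ = R := by
      refine Finset.eq_of_subset_of_card_le ?_ ?_
      · intro u hu
        obtain ⟨x, hx, rfl⟩ := Finset.mem_image.mp hu
        exact (Finset.mem_inter.mp (hfσ x hx)).2
      · rw [Finset.card_image_of_injective _ hfσinj]
    intro v hv
    rw [← himg] at hv
    obtain ⟨u, hu, huv⟩ := Finset.mem_image.mp hv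
    exact ⟨u, hu, huv⟩
  -- the cover function
  set nb : Fin k → Fin k := fun v => (hniso v).choose with hnbdef
  set partner : Fin k → Fin k := fun v =>
    if h : ∃ x, x ∈ NA ∧ fM x = v then h.choose else if v ∈ R then fσ v else nb v
    with hpartnerdef
  set pfun : Fin k → Sym2 (Fin k) := fun v => s(v, partner v) with hpfundef
  set c : Fin k → ℝ := fun v => if v ∈ A then 1 else if v ∈ NA then 0 else 1/2 with hcdef
  set φ : Sym2 (Fin k) → ℝ := fun e => ∑ v, if pfun v = e then c v else 0 with hφdef
  have hc0 : ∀ v, 0 ≤ c v := by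
    intro v; rw [hcdef]; dsimp only; split_ifs <;> norm_num
  have hchalf : ∀ v, v ∉ A → c v ≤ 1/2 := by
    intro v hv; rw [hcdef]; dsimp only; rw [if_neg hv]; split_ifs <;> norm_num
  have hcA : ∀ v ∈ A, c v = 1 := by intro v hv; rw [hcdef]; dsimp only; rw [if_pos hv]
  have hcNA : ∀ v ∈ NA, c v = 0 := by
    intro v hv; rw [hcdef]; dsimp only
    rw [if_neg (fun h => hANA v h hv), if_pos hv]
  have hcR : ∀ v ∈ R, c v = 1/2 := by
    intro v hv; rw [hcdef]; dsimp only
    rw [if_neg (hRA v hv), if_neg (hRNA v hv)]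
  have hpadj : ∀ v, H.Adj v (partner v) := by
    intro v
    rw [hpartnerdef]; dsimp only
    split_ifs with h1 h2
    · obtain ⟨hx, hfx⟩ := h1.choose_spec
      have := (Finset.mem_inter.mp (hfM _ hx)).1
      rw [hmemnbr, hfx] at this
      exact this.symm
    · have := (Finset.mem_inter.mp (hfσ v h2)).1
      rwa [hmemnbr] at this
    · exact (hniso v).choose_spec
  have hpartnerA : ∀ v ∈ A, partner v ∈ NA := by
    intro v hv
    rw [hpartnerdef]; dsimp only
    split_ifs with h1 h2
    · exact h1.choose_spec.1
    · exact absurd hv (hRA v h2)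
    · exact hnbrA v hv (nb v) (hniso v).choose_spec
  have hpartnerNe : ∀ v, partner v ≠ v := fun v => (hpadj v).ne'
  have hpmem : ∀ v, pfun v ∈ H.edgeFinset := by
    intro v
    rw [hpfundef]; dsimp only
    rw [SimpleGraph.mem_edgeFinset, SimpleGraph.mem_edgeSet]
    exact hpadj v
  have hkey : ∀ x y : Fin k, pfun x = s(x, y) → y = partner x := by
    intro x y h
    rw [hpfundef] at h; dsimp only at h
    rcases Sym2.eq_iff.mp h with ⟨-, h2⟩ | ⟨h1, h2⟩
    · exact h2.symm
    · exact absurd h2 (hpartnerNe x)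
  have hsupp : ∀ v e, pfun v = e → v ∈ e := by
    intro v e h
    rw [← h, hpfundef]
    exact Sym2.mem_mk_left v (partner v)
  have hswap : ∀ F : Finset (Sym2 (Fin k)),
      ∑ e ∈ F, φ e = ∑ u : Fin k, (if pfun u ∈ F then c u else 0) := by
    intro F
    rw [hφdef]; dsimp only
    rw [Finset.sum_comm]
    exact Finset.sum_congr rfl fun u _ => Finset.sum_ite_eq F (pfun u) (fun _ => c u)
  have hsumc : ∑ u : Fin k, c u = (A.card : ℝ) + (R.card : ℝ) / 2 := by
    have hNAsub : NA ⊆ univ \ A := fun v hv =>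
      Finset.mem_sdiff.mpr ⟨Finset.mem_univ v, fun h => hANA v h hv⟩
    rw [← Finset.sum_sdiff (Finset.subset_univ A), ← Finset.sum_sdiff hNAsub]
    have e1 : ∑ v ∈ A, c v = (A.card : ℝ) := by
      rw [Finset.sum_congr rfl (fun v hv => hcA v hv), Finset.sum_const, nsmul_eq_mul, mul_one]
    have e2 : ∑ v ∈ NA, c v = 0 := by
      rw [Finset.sum_congr rfl (fun v hv => hcNA v hv), Finset.sum_const, smul_zero]
    have e3 : ∑ v ∈ (univ \ A) \ NA, c v = (R.card : ℝ) / 2 := by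
      rw [Finset.sum_congr rfl (fun v hv => hcR v (by rw [hR]; exact hv)), Finset.sum_const,
        nsmul_eq_mul]
      rw [hR]
      ring
    rw [e1, e2, e3]
    ring
  have hmem : ((A.card : ℝ) + (R.card : ℝ) / 2) ∈ {r : ℝ | ∃ φ : Sym2 (Fin k) → ℝ,
      (∀ e, 0 ≤ φ e ∧ φ e ≤ 1) ∧
      (∀ v : Fin k, 1 ≤ ∑ e ∈ H.edgeFinset.filter (fun e => v ∈ e), φ e) ∧
      r = ∑ e ∈ H.edgeFinset, φ e} := by
    refine ⟨φ, ?_, ?_, ?_⟩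
    · intro e
      constructor
      · rw [hφdef]; dsimp only
        refine Finset.sum_nonneg fun v _ => ?_
        split_ifs with h
        · exact hc0 v
        · exact le_rfl
      · -- φ e ≤ 1
        induction e with
        | h x y =>
          have hres : φ s(x, y) = ∑ v ∈ ({x, y} : Finset (Fin k)),
              (if pfun v = s(x, y) then c v else 0) := by
            rw [hφdef]; dsimp only
            refine (Finset.sum_subset (Finset.subset_univ _) fun v _ hv => ?_).symm
            rw [if_neg]
            intro h
            rcases Sym2.mem_iff.mp (hsupp v _ h) with rfl | rfl
            · exact hv (Finset.mem_insert_self _ _)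
            · exact hv (Finset.mem_insert_of_mem (Finset.mem_singleton_self _))
          by_cases hxy : x = y
          · subst hxy
            rw [hres, Finset.pair_eq_singleton x, Finset.sum_singleton, if_neg]
            · norm_num
            · intro h
              exact hpartnerNe x (hkey x x h).symm
          · rw [hres, Finset.sum_pair hxy]
            have hkeyy : pfun y = s(x, y) → x = partner y := by
              intro h
              exact hkey y x (by rw [h, Sym2.eq_swap])
            by_cases hxA : x ∈ A <;> by_cases hyA : y ∈ A
            · rw [if_neg, if_neg]
              · norm_num
              · intro h
                exact hANA x hxA ((hkeyy h) ▸ hpartnerA y hyA)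
              · intro h
                exact hANA y hyA ((hkey x y h) ▸ hpartnerA x hxA)
            · by_cases hyNA : y ∈ NA
              · have h2 : (if pfun y = s(x, y) then c y else 0) = 0 := by
                  split_ifs
                  · exact hcNA y hyNA
                  · rfl
                rw [h2]
                have : (if pfun x = s(x, y) then c x else 0) ≤ 1 := by
                  split_ifs
                  · rw [hcA x hxA]
                  · norm_num
                linarith
              · have hyR : y ∈ R := hmemR y hyA hyNA
                rw [if_neg]
                · have : (if pfun y = s(x, y) then c y else 0) ≤ 1/2 := by
                    split_ifs
                    · exact hchalf y hyA
                    · norm_num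
                  linarith
                · intro h
                  exact hyNA ((hkey x y h) ▸ hpartnerA x hxA)
            · by_cases hxNA : x ∈ NA
              · have h2 : (if pfun x = s(x, y) then c x else 0) = 0 := by
                  split_ifs
                  · exact hcNA x hxNA
                  · rfl
                rw [h2]
                have : (if pfun y = s(x, y) then c y else 0) ≤ 1 := by
                  split_ifs
                  · rw [hcA y hyA]
                  · norm_num
                linarith
              · rw [if_neg (c := pfun y = s(x,y))]
                · have : (if pfun x = s(x, y) then c x else 0) ≤ 1/2 := by
                    split_ifs
                    · exact hchalf x hxA
                    · norm_num
                  linarith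
                · intro h
                  exact hxNA ((hkeyy h) ▸ hpartnerA y hyA)
            · have h1 : (if pfun x = s(x, y) then c x else 0) ≤ 1/2 := by
                split_ifs
                · exact hchalf x hxA
                · norm_num
              have h2 : (if pfun y = s(x, y) then c y else 0) ≤ 1/2 := by
                split_ifs
                · exact hchalf y hyA
                · norm_num
              linarith
    · -- coverage
      intro v
      rw [hswap]
      have hbound : ∀ T : Finset (Fin k),
          ∑ u ∈ T, (if pfun u ∈ H.edgeFinset.filter (fun e => v ∈ e) then c u else 0) ≤
          ∑ u : Fin k, (if pfun u ∈ H.edgeFinset.filter (fun e => v ∈ e) then c u else 0) := by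
        intro T
        refine Finset.sum_le_sum_of_subset_of_nonneg (Finset.subset_univ T) fun u _ _ => ?_
        split_ifs
        · exact hc0 u
        · exact le_rfl
      have hterm : ∀ u, v ∈ pfun u →
          (if pfun u ∈ H.edgeFinset.filter (fun e => v ∈ e) then c u else 0) = c u := by
        intro u hu
        rw [if_pos (Finset.mem_filter.mpr ⟨hpmem u, hu⟩)]
      by_cases hvA : v ∈ A
      · refine le_trans ?_ (hbound {v})
        rw [Finset.sum_singleton, hterm v (by rw [hpfundef]; exact Sym2.mem_mk_left _ _),
          hcA v hvA]
      · by_cases hvNA : v ∈ NA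
        · refine le_trans ?_ (hbound {fM v})
          have hfMvA : fM v ∈ A := (Finset.mem_inter.mp (hfM v hvNA)).2
          have hpart : partner (fM v) = v := by
            rw [hpartnerdef]; dsimp only
            have hex : ∃ x, x ∈ NA ∧ fM x = fM v := ⟨v, hvNA, rfl⟩
            rw [dif_pos hex]
            exact hfMinj hex.choose_spec.2
          rw [Finset.sum_singleton, hterm (fM v)
            (by rw [hpfundef]; dsimp only; rw [hpart]; exact Sym2.mem_mk_right _ _),
            hcA _ hfMvA]
        · have hvR : v ∈ R := hmemR v hvA hvNA
          obtain ⟨u, huR, hufv⟩ := hfσR v hvR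
          have hadj : H.Adj u v := by
            have := (Finset.mem_inter.mp (hfσ u huR)).1
            rwa [hmemnbr, hufv] at this
          have huv : u ≠ v := hadj.ne
          have hpartu : partner u = v := by
            rw [hpartnerdef]; dsimp only
            rw [dif_neg, if_pos huR]
            · exact hufv
            · rintro ⟨x, hxNA, hfxu⟩
              exact hRA u huR (hfxu ▸ (Finset.mem_inter.mp (hfM x hxNA)).2)
          refine le_trans ?_ (hbound {u, v})
          rw [Finset.sum_pair huv,
            hterm u (by rw [hpfundef]; dsimp only; rw [hpartu]; exact Sym2.mem_mk_right _ _),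
            hterm v (by rw [hpfundef]; exact Sym2.mem_mk_left _ _),
            hcR u huR, hcR v hvR]
          norm_num
    · rw [hswap, ← hsumc]
      refine Finset.sum_congr rfl fun u _ => ?_
      rw [if_pos (hpmem u)]
  have hbdd : BddBelow {r : ℝ | ∃ φ : Sym2 (Fin k) → ℝ,
      (∀ e, 0 ≤ φ e ∧ φ e ≤ 1) ∧
      (∀ v : Fin k, 1 ≤ ∑ e ∈ H.edgeFinset.filter (fun e => v ∈ e), φ e) ∧
      r = ∑ e ∈ H.edgeFinset, φ e} := by
    refine ⟨0, fun r hr => ?_⟩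
    obtain ⟨ψ, h1, h2, rfl⟩ := hr
    exact Finset.sum_nonneg fun e _ => (h1 e).1
  refine ⟨A, R, Finset.disjoint_left.mpr (fun v hv hvR => hRA v hvR hv), ?_, ?_⟩
  · intro u v hadj huA
    have hvNA : v ∈ NA := hnbrA u huA v hadj
    exact ⟨fun h => hANA v h hvNA, fun h => hRNA v h hvNA⟩
  · exact csInf_le hbdd hmem

lemma main_niso {k : ℕ} (H : SimpleGraph (Fin k)) [DecidableRel H.Adj]
    (hE : H.edgeFinset.Nonempty) (hiso : ∀ v : Fin k, ∃ u, H.Adj v u) :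
    ∃ c₂ : ℝ, 0 < c₂ ∧ ∃ L : ℕ, ∀ ℓ : ℕ, L ≤ ℓ →
      ∃ (m : ℕ) (G : SimpleGraph (Fin m)),
        G.edgeSet.ncard ≤ ℓ ∧ c₂ * (ℓ : ℝ) ^ fracCoverNum H ≤ (embedCount H G : ℝ) := by
  classical
  obtain ⟨A, R, hdisj, hedge, hfrac⟩ := core H hiso
  set Ec := H.edgeFinset.card with hEc
  have hEc1 : 1 ≤ Ec := Finset.card_pos.mpr hE
  refine ⟨((2 * Ec : ℝ) ^ k * 2 ^ k)⁻¹, by positivity, 8 * Ec, ?_⟩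
  intro ℓ hℓ
  set ℓ' := ℓ / Ec with hℓ'
  set s := Nat.sqrt ℓ' with hs
  have hℓ'8 : 8 ≤ ℓ' := (Nat.le_div_iff_mul_le (by omega)).mpr (by omega)
  have hs2 : 2 ≤ s := Nat.le_sqrt.mpr (by omega)
  have hs1 : 1 ≤ s := by omega
  have hss : s * s ≤ ℓ' := Nat.sqrt_le ℓ'
  set n : Fin k → ℕ := fun v => if v ∈ A then ℓ' else if v ∈ R then s else 1 with hn
  have hB : ∀ u v, H.Adj u v → n u * n v ≤ ℓ' := by
    intro u v hadj
    by_cases huA : u ∈ A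
    · obtain ⟨hvA, hvR⟩ := hedge u v hadj huA
      simp only [hn]
      rw [if_pos huA, if_neg hvA, if_neg hvR, mul_one]
    · by_cases hvA : v ∈ A
      · obtain ⟨huA', huR⟩ := hedge v u hadj.symm hvA
        simp only [hn]
        rw [if_neg huA, if_neg huR, if_pos hvA, one_mul]
      · have h1 : n u ≤ s := by
          simp only [hn]; rw [if_neg huA]; split_ifs
          · exact le_rfl
          · exact hs1
        have h2 : n v ≤ s := by
          simp only [hn]; rw [if_neg hvA]; split_ifs
          · exact le_rfl
          · exact hs1
        exact le_trans (Nat.mul_le_mul h1 h2) hss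
  obtain ⟨m, G, hGe, hGc⟩ := blowup H n ℓ' hB
  refine ⟨m, G, ?_, ?_⟩
  · refine le_trans hGe ?_
    rw [mul_comm]
    exact Nat.div_mul_le_self ℓ _
  · -- the numeric part
    have hprod : (∏ v, n v) = ℓ' ^ A.card * s ^ R.card := by
      rw [← Finset.prod_sdiff (Finset.subset_univ A)]
      have hRsub : R ⊆ univ \ A := fun v hv =>
        Finset.mem_sdiff.mpr ⟨Finset.mem_univ v, fun h => (Finset.disjoint_left.mp hdisj h) hv⟩
      rw [← Finset.prod_sdiff hRsub]
      have e1 : ∏ v ∈ A, n v = ℓ' ^ A.card := by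
        rw [Finset.prod_congr rfl (fun v hv => by simp only [hn]; rw [if_pos hv]),
          Finset.prod_const]
      have e2 : ∏ v ∈ R, n v = s ^ R.card := by
        rw [Finset.prod_congr rfl (fun v hv => by
          simp only [hn]
          rw [if_neg (fun h => (Finset.disjoint_left.mp hdisj h) hv), if_pos hv]),
          Finset.prod_const]
      have e3 : ∏ v ∈ (univ \ A) \ R, n v = 1 := by
        refine Finset.prod_eq_one fun v hv => ?_
        obtain ⟨hv1, hv2⟩ := Finset.mem_sdiff.mp hv
        simp only [hn]
        rw [if_neg (Finset.mem_sdiff.mp hv1).2, if_neg hv2]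
      rw [e1, e2, e3, one_mul]
      ring
    set a := A.card with ha
    set b := R.card with hb
    have habk : a + b ≤ k := by
      have h1 : (A ∪ R).card = a + b := Finset.card_union_of_disjoint hdisj
      have h2 : (A ∪ R).card ≤ Fintype.card (Fin k) := Finset.card_le_univ _
      rw [h1, Fintype.card_fin] at h2
      exact h2
    set t : ℝ := (a : ℝ) + (b : ℝ) / 2 with ht
    have ht0 : 0 ≤ t := by
      rw [ht]
      have h1 := Nat.cast_nonneg (α := ℝ) a
      have h2 := Nat.cast_nonneg (α := ℝ) b
      linarith
    have htk : t ≤ (k : ℝ) := by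
      have : (a : ℝ) + (b : ℝ) ≤ (k : ℝ) := by exact_mod_cast habk
      rw [ht]; linarith [Nat.cast_nonneg (α := ℝ) b]
    have hℓ1 : (1 : ℝ) ≤ (ℓ : ℝ) := by
      have : 1 ≤ ℓ := by omega
      exact_mod_cast this
    have hLa0 : (0 : ℝ) < (ℓ' : ℝ) := by
      have : 0 < ℓ' := by omega
      exact_mod_cast this
    -- ℓ ≤ 2 * Ec * ℓ'
    have hl2 : (ℓ : ℝ) ≤ (2 * Ec : ℝ) * (ℓ' : ℝ) := by
      have e1 : Ec * ℓ' + ℓ % Ec = ℓ := Nat.div_add_mod ℓ Ec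
      have e2 : ℓ % Ec < Ec := Nat.mod_lt _ (by omega)
      have e3 : Ec ≤ Ec * ℓ' := Nat.le_mul_of_pos_right Ec (by omega)
      have : ℓ ≤ 2 * (Ec * ℓ') := by omega
      have := (Nat.cast_le (α := ℝ)).mpr this
      push_cast at this ⊢
      linarith
    -- √ℓ' ≤ 2s
    have hsqrt : Real.sqrt (ℓ' : ℝ) ≤ 2 * (s : ℝ) := by
      have h1 : (ℓ' : ℝ) ≤ ((s + 1 : ℕ) : ℝ) ^ 2 := by
        exact_mod_cast le_of_lt (Nat.lt_succ_sqrt' ℓ')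
      have h2 : Real.sqrt (ℓ' : ℝ) ≤ ((s + 1 : ℕ) : ℝ) := by
        rw [show ((s + 1 : ℕ) : ℝ) = Real.sqrt (((s + 1 : ℕ) : ℝ) ^ 2) from
          (Real.sqrt_sq (by positivity)).symm]
        exact Real.sqrt_le_sqrt h1
      have h3 : ((s + 1 : ℕ) : ℝ) ≤ 2 * s := by
        push_cast
        have : (1 : ℝ) ≤ (s : ℝ) := by exact_mod_cast hs1
        linarith
      linarith
    have hsq0 : 0 ≤ Real.sqrt (ℓ' : ℝ) := Real.sqrt_nonneg _
    -- ℓ'^t = ℓ'^a * (√ℓ')^b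
    have hsplit : (ℓ' : ℝ) ^ t = (ℓ' : ℝ) ^ a * (Real.sqrt (ℓ' : ℝ)) ^ b := by
      rw [ht, Real.rpow_add hLa0, Real.rpow_natCast]
      congr 1
      rw [Real.sqrt_eq_rpow, ← Real.rpow_natCast ((ℓ' : ℝ) ^ ((1:ℝ)/2)) b,
        ← Real.rpow_mul (le_of_lt hLa0)]
      congr 1
      ring
    have hEcR : (1:ℝ) ≤ (Ec:ℝ) := by exact_mod_cast hEc1
    have hcpos : (0:ℝ) < ((2 * Ec : ℝ) ^ k * 2 ^ k)⁻¹ :=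
      inv_pos.mpr (mul_pos (pow_pos (by linarith) k) (pow_pos (by norm_num) k))
    have hsR : (1:ℝ) ≤ (s:ℝ) := by exact_mod_cast hs1
    calc ((2 * Ec : ℝ) ^ k * 2 ^ k)⁻¹ * (ℓ : ℝ) ^ fracCoverNum H
        ≤ ((2 * Ec : ℝ) ^ k * 2 ^ k)⁻¹ * (ℓ : ℝ) ^ t := by
          have h1 := Real.rpow_le_rpow_of_exponent_le hℓ1 hfrac
          exact mul_le_mul_of_nonneg_left h1 hcpos.le
      _ ≤ ((2 * Ec : ℝ) ^ k * 2 ^ k)⁻¹ * ((2 * Ec : ℝ) * (ℓ' : ℝ)) ^ t := by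
          refine mul_le_mul_of_nonneg_left ?_ hcpos.le
          exact Real.rpow_le_rpow (Nat.cast_nonneg ℓ) hl2 ht0
      _ = ((2 * Ec : ℝ) ^ k * 2 ^ k)⁻¹ * ((2 * Ec : ℝ) ^ t * (ℓ' : ℝ) ^ t) := by
          rw [Real.mul_rpow (by linarith) (le_of_lt hLa0)]
      _ ≤ ((2 * Ec : ℝ) ^ k * 2 ^ k)⁻¹ * ((2 * Ec : ℝ) ^ (k:ℕ) * (ℓ' : ℝ) ^ t) := by
          refine mul_le_mul_of_nonneg_left (mul_le_mul_of_nonneg_right ?_ ?_) hcpos.le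
          · rw [← Real.rpow_natCast (2 * Ec : ℝ) k]
            exact Real.rpow_le_rpow_of_exponent_le (by linarith) htk
          · exact Real.rpow_nonneg (le_of_lt hLa0) t
      _ = (2 : ℝ)⁻¹ ^ k * (ℓ' : ℝ) ^ t := by
          have h1 : ((2 * Ec : ℝ) ^ k) ≠ 0 := ne_of_gt (pow_pos (by linarith) k)
          calc ((2 * Ec : ℝ) ^ k * 2 ^ k)⁻¹ * ((2 * Ec : ℝ) ^ (k:ℕ) * (ℓ' : ℝ) ^ t)
              = (((2 * Ec : ℝ) ^ k)⁻¹ * (2 * Ec : ℝ) ^ k) * (((2:ℝ) ^ k)⁻¹ * (ℓ' : ℝ) ^ t) := by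
                rw [mul_inv]; ring
            _ = ((2:ℝ) ^ k)⁻¹ * (ℓ' : ℝ) ^ t := by rw [inv_mul_cancel₀ h1, one_mul]
            _ = (2 : ℝ)⁻¹ ^ k * (ℓ' : ℝ) ^ t := by rw [inv_pow]
      _ ≤ (2 : ℝ)⁻¹ ^ b * (ℓ' : ℝ) ^ t := by
          refine mul_le_mul_of_nonneg_right
            (pow_le_pow_of_le_one (by norm_num) (by norm_num) (by omega)) ?_
          exact Real.rpow_nonneg (le_of_lt hLa0) t
      _ = (ℓ' : ℝ) ^ a * ((2 : ℝ)⁻¹ * Real.sqrt (ℓ' : ℝ)) ^ b := by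
          rw [hsplit, mul_pow]
          ring
      _ ≤ (ℓ' : ℝ) ^ a * (s : ℝ) ^ b := by
          refine mul_le_mul_of_nonneg_left
            (pow_le_pow_left₀ (mul_nonneg (by norm_num) hsq0) (by linarith) b) ?_
          exact pow_nonneg (le_of_lt hLa0) a
      _ = ((ℓ' ^ a * s ^ b : ℕ) : ℝ) := by push_cast; ring
      _ ≤ (embedCount H G : ℝ) := by
          exact_mod_cast le_trans (le_of_eq hprod.symm) hGc

/-- Friedgut–Kahn lower bound: for every graph `H` with at least one edge there is a
constant `c₂ > 0` such that for all sufficiently large `ℓ` some graph `G` with at most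
`ℓ` edges admits at least `c₂ ℓ^{ρ*(H)}` embeddings of `H`. -/
theorem embed_lower_bound {k : ℕ} (H : SimpleGraph (Fin k)) [DecidableRel H.Adj]
    (hE : H.edgeFinset.Nonempty) :
    ∃ c₂ : ℝ, 0 < c₂ ∧ ∃ L : ℕ, ∀ ℓ : ℕ, L ≤ ℓ →
      ∃ (m : ℕ) (G : SimpleGraph (Fin m)),
        G.edgeSet.ncard ≤ ℓ ∧ c₂ * (ℓ : ℝ) ^ fracCoverNum H ≤ (embedCount H G : ℝ) := by
  classical
  by_cases hiso : ∀ v : Fin k, ∃ u, H.Adj v u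
  · exact main_niso H hE hiso
  · push_neg at hiso
    obtain ⟨v, hv⟩ := hiso
    rw [isolated_case H v hv]
    refine ⟨1, one_pos, Fintype.card (Sym2 (Fin k)), ?_⟩
    intro ℓ hℓ
    refine ⟨k, (⊤ : SimpleGraph (Fin k)), ?_, ?_⟩
    · have h1 : (⊤ : SimpleGraph (Fin k)).edgeSet.ncard
          = (⊤ : SimpleGraph (Fin k)).edgeFinset.card := by
        rw [Set.ncard_eq_toFinset_card', SimpleGraph.edgeFinset]
      rw [h1]
      exact le_trans (Finset.card_le_univ _) hℓ
    · rw [Real.rpow_zero, one_mul]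
      have hone : (1 : ℕ) ≤ embedCount H (⊤ : SimpleGraph (Fin k)) := by
        have hne : Nonempty {f : Fin k → Fin k // Function.Injective f ∧
            ∀ u v : Fin k, H.Adj u v → (⊤ : SimpleGraph (Fin k)).Adj (f u) (f v)} :=
          ⟨⟨id, Function.injective_id, fun u v h => by simpa using h.ne⟩⟩
        exact Nat.one_le_iff_ne_zero.mpr (Nat.card_ne_zero.mpr ⟨hne, inferInstance⟩)
      exact_mod_cast hone
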